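/- Let k ≥ 2 and let h, h′ be integers with 1 ≤ h, h′ < k, gcd(h,k) = 1, and h·h′ ≡ 1 (mod k). Then (k²/6)·Σ_{d=1}^{k-1} B₃(d/k)·cot(π d h/k) = −(2·k³/(2π)³)·Σ_{ℓ ∈ ℤ, ℓ ≠ 0} B̃₁(ℓ·h′/k)/ℓ³, where B₃(x) = x³ − (3/2)x² + (1/2)x is the third Bernoulli polynomial and the series on the right converges absolutely. -/

import Mathlib

open Real in
private lemma cot_mul_sin_sum_aux (θ : ℝ) (hs : Real.sin θ ≠ 0) : ∀ m : ℕ,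
    Real.cot θ * Real.sin (2*m*θ) =
      Real.cos (2*m*θ) - 1 + 2 * ∑ j ∈ Finset.range m, Real.cos (2*j*θ)
  | 0 => by simp
  | (m+1) => by
    have ih := cot_mul_sin_sum_aux θ hs m
    rw [Finset.sum_range_succ]
    have h1 : (2:ℝ)*(m+1:ℕ)*θ = 2*m*θ + 2*θ := by push_cast; ring
    rw [h1, Real.sin_add, Real.cos_add, Real.sin_two_mul, Real.cos_two_mul,
      Real.cot_eq_cos_div_sin] at *
    have hpy := Real.sin_sq_add_cos_sq θ
    field_simp at ih ⊢
    linear_combination ih + 2*Real.cos θ*Real.sin (2*(m:ℝ)*θ)*hpy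

open Real Complex in
private lemma sum_cos_range_aux (k j : ℕ) (hk : 0 < k) :
    ∑ a ∈ Finset.range k, Real.cos (2*π*j*a/k) = if k ∣ j then (k:ℝ) else 0 := by
  have hk0 : (k:ℂ) ≠ 0 := Nat.cast_ne_zero.mpr hk.ne'
  by_cases hd : k ∣ j
  · obtain ⟨t, rfl⟩ := hd
    rw [if_pos ⟨t, rfl⟩]
    have : ∀ a ∈ Finset.range k, Real.cos (2*π*((k*t:ℕ):ℝ)*a/k) = 1 := by
      intro a _
      have : 2*π*((k*t:ℕ):ℝ)*a/k = (t*a : ℕ) * (2*π) := by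
        have : (k:ℝ) ≠ 0 := Nat.cast_ne_zero.mpr hk.ne'
        push_cast
        field_simp
      rw [this, Real.cos_nat_mul_two_pi]
    rw [Finset.sum_congr rfl this, Finset.sum_const, Finset.card_range]
    simp
  · rw [if_neg hd]
    set z : ℂ := Complex.exp (2*π*Complex.I*j/k) with hz
    have hπ : (2*π*Complex.I : ℂ) ≠ 0 :=
      mul_ne_zero (mul_ne_zero two_ne_zero (Complex.ofReal_ne_zero.mpr Real.pi_ne_zero))
        Complex.I_ne_zero
    have hzk : z ^ k = 1 := by
      rw [hz, ← Complex.exp_nat_mul]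
      have : (k:ℂ) * (2*π*Complex.I*j/k) = (j:ℤ) * (2*π*Complex.I) := by
        field_simp
        push_cast
        ring
      rw [this, Complex.exp_int_mul_two_pi_mul_I]
    have hz1 : z ≠ 1 := by
      rw [hz]
      intro hcon
      rw [Complex.exp_eq_one_iff] at hcon
      obtain ⟨n, hn⟩ := hcon
      have hjk : (j:ℂ) = n * k := by
        field_simp at hn
        have h2 : (j:ℂ) * (2*π*Complex.I) = (n*k : ℂ) * (2*π*Complex.I) := by
          linear_combination (2*π*Complex.I) * hn
        exact mul_right_cancel₀ hπ h2
      have hjz : (j:ℤ) = n * k := by exact_mod_cast hjk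
      exact hd (Int.ofNat_dvd.mp ⟨n, by rw [hjz]; ring⟩)
    have key : ∀ a : ℕ, Real.cos (2*π*j*a/k) = (z^a).re := by
      intro a
      rw [hz, ← Complex.exp_nat_mul]
      have : (a:ℂ) * (2*π*Complex.I*j/k) = ((2*π*j*a/k : ℝ) : ℂ) * Complex.I := by
        push_cast
        field_simp
      rw [this, Complex.exp_ofReal_mul_I_re]
    calc ∑ a ∈ Finset.range k, Real.cos (2*π*j*a/k)
        = (∑ a ∈ Finset.range k, z^a).re := by
          rw [Complex.re_sum]
          exact Finset.sum_congr rfl fun a _ => key a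
      _ = 0 := by
          rw [geom_sum_eq hz1, hzk]
          simp

open Real in
private lemma sum_cos_Icc_aux (k j : ℕ) (hk : 2 ≤ k) :
    ∑ a ∈ Finset.Icc 1 (k-1), Real.cos (2*π*j*a/k) = (if k ∣ j then (k:ℝ) else 0) - 1 := by
  have h1 : Finset.Icc 1 (k-1) = Finset.Ico 1 k := by
    rw [← Finset.Ico_add_one_right_eq_Icc]
    congr 1
    omega
  have h2 := sum_cos_range_aux k j (by omega)
  rw [Finset.range_eq_Ico, Finset.sum_eq_sum_Ico_succ_bot (by omega : 0 < k)] at h2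
  rw [h1]
  have h0 : Real.cos (2*π*j*(0:ℕ)/k) = 1 := by norm_num
  rw [h0] at h2
  linarith

open Real in
private lemma cot_sin_core_aux (k m : ℕ) (hk : 2 ≤ k) (hm1 : 1 ≤ m) (hm : m ≤ k-1) :
    ∑ a ∈ Finset.Icc 1 (k-1), Real.sin (2*π*m*a/k) * Real.cot (π*a/k)
      = (k:ℝ) - 2*m := by
  have hk0 : (k:ℝ) ≠ 0 := by positivity
  have hstep : ∀ a ∈ Finset.Icc 1 (k-1), Real.sin (2*π*m*a/k) * Real.cot (π*a/k)
      = Real.cos (2*π*m*a/k) - 1 + 2 * ∑ j ∈ Finset.range m, Real.cos (2*π*j*a/k) := by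
    intro a ha
    rw [Finset.mem_Icc] at ha
    have hsin : Real.sin (π*a/k) ≠ 0 := by
      apply ne_of_gt
      apply Real.sin_pos_of_pos_of_lt_pi
      · have : (0:ℝ) < a := by exact_mod_cast Nat.lt_of_lt_of_le Nat.zero_lt_one ha.1
        positivity
      · rw [div_lt_iff₀ (by positivity)]
        have : (a:ℝ) < k := by
          have : a < k := by omega
          exact_mod_cast this
        nlinarith [Real.pi_pos]
    have := cot_mul_sin_sum_aux (π*a/k) hsin m
    have e1 : 2*(m:ℝ)*(π*a/k) = 2*π*m*a/k := by ring
    have e2 : ∀ j : ℕ, 2*(j:ℝ)*(π*a/k) = 2*π*j*a/k := fun j => by ring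
    rw [e1] at this
    simp_rw [e2] at this
    linarith [this]
  rw [Finset.sum_congr rfl hstep]
  rw [Finset.sum_add_distrib, Finset.sum_sub_distrib]
  have hcard : (Finset.Icc 1 (k-1)).card = k - 1 := by
    rw [Nat.card_Icc]
    omega
  have hndvd : ∀ j : ℕ, 1 ≤ j → j ≤ k-1 → ¬ k ∣ j := by
    intro j hj1 hj2 hdvd
    exact absurd (Nat.le_of_dvd (by omega) hdvd) (by omega)
  have hA : ∑ a ∈ Finset.Icc 1 (k-1), Real.cos (2*π*m*a/k) = -1 := by
    rw [sum_cos_Icc_aux k m hk, if_neg (hndvd m hm1 hm)]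
    norm_num
  have hB : ∑ a ∈ Finset.Icc 1 (k-1), (1:ℝ) = (k:ℝ) - 1 := by
    rw [Finset.sum_const, hcard]
    have : ((k-1:ℕ):ℝ) = (k:ℝ) - 1 := by
      have : (1:ℕ) ≤ k := by omega
      push_cast [Nat.cast_sub this]
      ring
    simp [this]
  have hC : ∑ a ∈ Finset.Icc 1 (k-1), (2 * ∑ j ∈ Finset.range m, Real.cos (2*π*j*a/k))
      = 2 * ((k:ℝ) - m) := by
    have swap : ∑ a ∈ Finset.Icc 1 (k-1), ∑ j ∈ Finset.range m, Real.cos (2*π*j*a/k)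
        = ∑ j ∈ Finset.range m, ∑ a ∈ Finset.Icc 1 (k-1), Real.cos (2*π*j*a/k) :=
      Finset.sum_comm
    simp_rw [← Finset.mul_sum] at *
    rw [swap]
    have : ∀ j ∈ Finset.range m, ∑ a ∈ Finset.Icc 1 (k-1), Real.cos (2*π*j*a/k)
        = (if j = 0 then (k:ℝ) else 0) - 1 := by
      intro j hj
      rw [Finset.mem_range] at hj
      rw [sum_cos_Icc_aux k j hk]
      congr 1
      by_cases hj0 : j = 0
      · simp [hj0]
      · rw [if_neg hj0, if_neg (hndvd j (by omega) (by omega))]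
    rw [Finset.sum_congr rfl this]
    rw [Finset.sum_sub_distrib, Finset.sum_ite_eq' (Finset.range m) 0 (fun _ => (k:ℝ))]
    rw [if_pos (Finset.mem_range.mpr (by omega)), Finset.sum_const, Finset.card_range]
    simp
  rw [hA, hB, hC]
  ring

/-- The periodic Bernoulli function `B̃₁`: `B̃₁(x) = {x} - 1/2` for `x ∉ ℤ`,
and `B̃₁(x) = 0` for `x ∈ ℤ`. -/
noncomputable def periodicB1 (x : ℝ) : ℝ :=
  if Int.fract x = 0 then 0 else Int.fract x - 1 / 2

private lemma periodicB1_neg (x : ℝ) : periodicB1 (-x) = - periodicB1 x := by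
  unfold periodicB1
  by_cases hx : Int.fract x = 0
  · rw [if_pos hx, if_pos (Int.fract_neg_eq_zero.mpr hx), neg_zero]
  · rw [if_neg hx, if_neg (fun hc => hx (Int.fract_neg_eq_zero.mp hc)), Int.fract_neg hx]
    ring

private lemma periodicB1_abs_le (x : ℝ) : |periodicB1 x| ≤ 1 := by
  unfold periodicB1
  split
  · simp
  · rw [abs_le]
    constructor <;> nlinarith [Int.fract_nonneg x, Int.fract_lt_one x]

open Real in
private lemma cot_add_int_mul_pi_aux (x : ℝ) (n : ℤ) : Real.cot (x + n*π) = Real.cot x := by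
  rw [Real.cot_eq_cos_div_sin, Real.cot_eq_cos_div_sin, Real.sin_add_int_mul_pi,
    Real.cos_add_int_mul_pi]
  exact mul_div_mul_left _ _ (zpow_ne_zero n (by norm_num))

open Real in
private lemma stepC_aux (h h' k : ℕ) (hk : 2 ≤ k)
    (hinv : h * h' ≡ 1 [MOD k]) (n : ℕ) (hn : 1 ≤ n) :
    ∑ d ∈ Finset.Icc 1 (k-1), Real.sin (2*π*n*d/k) * Real.cot (π*d*h/k)
      = -2*k*periodicB1 ((n:ℝ)*h'/k) := by
  have hkR : (k:ℝ) ≠ 0 := by positivity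
  have hcopr : Nat.Coprime h k := Nat.coprime_of_mul_modEq_one h' hinv
  have hcopr' : Nat.Coprime h' k :=
    Nat.coprime_of_mul_modEq_one h (by rwa [mul_comm] at hinv)
  by_cases hdvd : k ∣ n
  · obtain ⟨t, rfl⟩ := hdvd
    have hB : periodicB1 (((k*t:ℕ):ℝ)*h'/k) = 0 := by
      have : ((k*t:ℕ):ℝ)*h'/k = ((t*h' : ℕ):ℝ) := by push_cast; field_simp
      rw [periodicB1, this, Int.fract_natCast, if_pos rfl]
    rw [hB]
    have : ∀ d ∈ Finset.Icc 1 (k-1), Real.sin (2*π*((k*t:ℕ):ℝ)*d/k) * Real.cot (π*d*h/k) = 0 := by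
      intro d _
      have e : 2*π*((k*t:ℕ):ℝ)*d/k = 0 + ((t*d:ℕ):ℤ) * (2*π) := by
        push_cast; field_simp; ring
      rw [e, Real.sin_add_int_mul_two_pi, Real.sin_zero, zero_mul]
    rw [Finset.sum_congr rfl this]
    simp
  · -- k does not divide n
    set r : ℕ := (n * h') % k with hr
    have hrne : ¬ k ∣ n * h' := fun hd => hdvd (hcopr'.symm.dvd_of_dvd_mul_right hd)
    have hr0 : r ≠ 0 := fun h0 => hrne (Nat.dvd_of_mod_eq_zero h0)
    have hrk : r < k := Nat.mod_lt _ (by omega)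
    have hr1 : 1 ≤ r := Nat.one_le_iff_ne_zero.mpr hr0
    have hfr : Int.fract ((n:ℝ)*h'/k) = (r:ℝ)/k := by
      have : (n:ℝ)*h'/k = ((n*h' : ℕ):ℝ)/((k:ℕ):ℝ) := by push_cast; ring
      rw [this, Int.fract_div_natCast_eq_div_natCast_mod]
    have hB : periodicB1 ((n:ℝ)*h'/k) = (r:ℝ)/k - 1/2 := by
      rw [periodicB1, hfr, if_neg]
      positivity
    rw [hB]
    have hmain : ∑ d ∈ Finset.Icc 1 (k-1), Real.sin (2*π*n*d/k) * Real.cot (π*d*h/k)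
        = ∑ a ∈ Finset.Icc 1 (k-1), Real.sin (2*π*r*a/k) * Real.cot (π*a/k) := by
      apply Finset.sum_bij' (fun d _ => (h*d) % k) (fun a _ => (h'*a) % k)
      · intro d hd
        rw [Finset.mem_Icc] at hd ⊢
        have hne : ¬ k ∣ h*d := by
          intro hdd
          have : k ∣ d := hcopr.symm.dvd_of_dvd_mul_left hdd
          exact absurd (Nat.le_of_dvd (by omega) this) (by omega)
        have : (h*d) % k ≠ 0 := fun h0 => hne (Nat.dvd_of_mod_eq_zero h0)
        have := Nat.mod_lt (h*d) (show 0 < k by omega)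
        omega
      · intro a ha
        rw [Finset.mem_Icc] at ha ⊢
        have hne : ¬ k ∣ h'*a := by
          intro hdd
          have : k ∣ a := hcopr'.symm.dvd_of_dvd_mul_left hdd
          exact absurd (Nat.le_of_dvd (by omega) this) (by omega)
        have : (h'*a) % k ≠ 0 := fun h0 => hne (Nat.dvd_of_mod_eq_zero h0)
        have := Nat.mod_lt (h'*a) (show 0 < k by omega)
        omega
      · intro d hd
        rw [Finset.mem_Icc] at hd
        have : h' * ((h*d) % k) ≡ d [MOD k] := by
          calc h' * ((h*d) % k) ≡ h' * (h*d) [MOD k] :=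
                Nat.ModEq.mul_left h' (Nat.mod_modEq _ _)
            _ = (h*h') * d := by ring
            _ ≡ 1 * d [MOD k] := Nat.ModEq.mul_right d hinv
            _ = d := by ring
        have h2 : h' * ((h*d) % k) % k = d % k := this
        rw [Nat.mod_eq_of_lt (by omega : d < k)] at h2
        exact h2
      · intro a ha
        rw [Finset.mem_Icc] at ha
        have : h * ((h'*a) % k) ≡ a [MOD k] := by
          calc h * ((h'*a) % k) ≡ h * (h'*a) [MOD k] :=
                Nat.ModEq.mul_left h (Nat.mod_modEq _ _)
            _ = (h*h') * a := by ring
            _ ≡ 1 * a [MOD k] := Nat.ModEq.mul_right a hinv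
            _ = a := by ring
        have h2 : h * ((h'*a) % k) % k = a % k := this
        rw [Nat.mod_eq_of_lt (by omega : a < k)] at h2
        exact h2
      · intro d hd
        rw [Finset.mem_Icc] at hd
        set a := (h*d) % k with hadef
        have hdiv : h*d = a + k * ((h*d)/k) := by
          rw [hadef]; exact (Nat.mod_add_div (h*d) k).symm
        have hcot : Real.cot (π*d*h/k) = Real.cot (π*a/k) := by
          have e : π*d*h/k = π*a/k + ((h*d)/k : ℕ) * π := by
            rw [div_add' _ _ _ hkR]
            congr 1
            have hc : ((h*d : ℕ):ℝ) = (a:ℝ) + (k:ℝ)*((h*d)/k : ℕ) := by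
              exact_mod_cast congrArg (Nat.cast : ℕ → ℝ) hdiv
            push_cast at hc
            linear_combination π * hc
          rw [e]
          exact_mod_cast cot_add_int_mul_pi_aux (π*a/k) ((h*d)/k : ℕ)
        have hmod : n*d ≡ r*a [MOD k] := by
          calc n*d ≡ (h*h')*(n*d) [MOD k] := by
                have := (Nat.ModEq.mul_right (n*d) hinv).symm
                simpa using this
            _ = (n*h') * (h*d) := by ring
            _ ≡ r * a [MOD k] :=
                Nat.ModEq.mul (Nat.mod_modEq _ _).symm (Nat.mod_modEq _ _).symm
        obtain ⟨t, ht⟩ := (Nat.modEq_iff_dvd.mp hmod)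
        have hsin : Real.sin (2*π*n*d/k) = Real.sin (2*π*r*a/k) := by
          have e : 2*π*n*d/k = 2*π*r*a/k + ((-t : ℤ):ℝ) * (2*π) := by
            have hre : ((r:ℝ)*(a:ℝ)) - (n:ℝ)*(d:ℝ) = (k:ℝ) * t := by
              exact_mod_cast ht
            push_cast
            field_simp
            linear_combination -hre
          rw [e, Real.sin_add_int_mul_two_pi]
        rw [hsin, hcot]
    rw [hmain, cot_sin_core_aux k r hk hr1 (by omega)]
    field_simp
    ring

open Real in
private lemma bern3_aeval_aux (x : ℝ) :
    (Polynomial.aeval x) (Polynomial.bernoulli 3) = x^3 - (3/2)*x^2 + (1/2)*x := by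
  have h3 : bernoulli 3 = 0 := by
    rw [bernoulli, bernoulli'_three]
    simp
  have h2 : bernoulli 2 = 1/6 := by
    rw [bernoulli, bernoulli'_two]
    norm_num
  simp [Polynomial.bernoulli, Finset.sum_range_succ, bernoulli_zero, bernoulli_one, h2, h3]
  norm_num
  ring

open Real in
private lemma sin_hasSum_aux (x : ℝ) (hx : x ∈ Set.Icc (0:ℝ) 1) :
    HasSum (fun n : ℕ => 1 / (n : ℝ) ^ 3 * Real.sin (2 * π * n * x))
      ((2*π)^3/12 * (x^3 - (3/2)*x^2 + (1/2)*x)) := by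
  have := hasSum_one_div_nat_pow_mul_sin (k := 1) one_ne_zero hx
  norm_num at this
  rw [bern3_aeval_aux] at this
  have hf : ((Nat.factorial 3 : ℕ) : ℝ) = 6 := by
    norm_num [Nat.factorial]
  convert this using 2
  · rw [one_div]
  · ring

theorem vhk1_eq_fourier (h h' k : ℕ) (hk : 2 ≤ k)
    (hh1 : 1 ≤ h) (hh : h < k) (hh'1 : 1 ≤ h') (hh' : h' < k)
    (hgcd : Nat.gcd h k = 1) (hinv : h * h' ≡ 1 [MOD k]) :
    Summable (fun l : ℤ => |if l = 0 then (0 : ℝ) else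
      periodicB1 ((l : ℝ) * h' / k) / (l : ℝ) ^ 3|) ∧
    ((k : ℝ) ^ 2 / 6) * ∑ d ∈ Finset.Icc 1 (k - 1),
        (((d : ℝ) / k) ^ 3 - (3 / 2) * ((d : ℝ) / k) ^ 2 + (1 / 2) * ((d : ℝ) / k)) *
          Real.cot (Real.pi * d * h / k)
      = -(2 * (k : ℝ) ^ 3 / (2 * Real.pi) ^ 3) *
        ∑' l : ℤ, (if l = 0 then (0 : ℝ) else periodicB1 ((l : ℝ) * h' / k) / (l : ℝ) ^ 3) := by
  have hk0 : (k:ℝ) ≠ 0 := by positivity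
  set f : ℤ → ℝ := fun l => if l = 0 then (0:ℝ) else periodicB1 ((l:ℝ)*h'/k) / (l:ℝ)^3 with hfdef
  set g : ℕ → ℝ := fun n => if n = 0 then (0:ℝ) else periodicB1 ((n:ℝ)*h'/k) / (n:ℝ)^3 with hgdef
  have hbound : ∀ l : ℤ, |f l| ≤ |1/(l:ℝ)^3| := by
    intro l
    by_cases hl : l = 0
    · simp [hfdef, hl]
    · simp only [hfdef, if_neg hl]
      rw [div_eq_mul_one_div, abs_mul]
      calc |periodicB1 ((l:ℝ)*h'/k)| * |1/(l:ℝ)^3|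
          ≤ 1 * |1/(l:ℝ)^3| :=
            mul_le_mul_of_nonneg_right (periodicB1_abs_le _) (abs_nonneg _)
        _ = |1/(l:ℝ)^3| := one_mul _
  have hsum_int_abs : Summable (fun l : ℤ => |f l|) :=
    Summable.of_nonneg_of_le (fun _ => abs_nonneg _) hbound
      ((Real.summable_one_div_int_pow.mpr (by norm_num)).abs)
  refine ⟨hsum_int_abs, ?_⟩
  have hsumf : Summable f := summable_abs_iff.mp hsum_int_abs
  have hfg : ∀ n : ℕ, f (n : ℤ) = g n := by
    intro n
    simp only [hfdef, hgdef, Int.cast_natCast, Int.natCast_eq_zero]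
  have hsumg : Summable g := by
    have h1 : Summable (fun n : ℕ => f (n:ℤ)) :=
      hsumf.comp_injective (fun a b hab => by exact_mod_cast hab)
    exact h1.congr hfg
  set A := ∑' n : ℕ, g n with hAdef
  have hgA : HasSum g A := hsumg.hasSum
  have hsum_shift : Summable (fun n : ℕ => g (n+1)) := (summable_nat_add_iff 1).mpr hsumg
  have hAshift : ∑' n : ℕ, g (n+1) = A := by
    rw [hAdef, Summable.tsum_eq_zero_add hsumg]
    simp [hgdef]
  have hfneg : ∀ n : ℕ, f (-((n:ℤ)+1)) = f ((n:ℤ)+1) := by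
    intro n
    have hne : ((n:ℤ)+1) ≠ 0 := by omega
    have hne' : (-((n:ℤ)+1)) ≠ 0 := by omega
    simp only [hfdef, if_neg hne, if_neg hne']
    have e1 : ((-((n:ℤ)+1) : ℤ):ℝ) = -((((n:ℤ)+1) : ℤ):ℝ) := by push_cast; ring
    rw [e1, show (-(((((n:ℤ)+1)) : ℤ):ℝ)) * h' / k = -(((((n:ℤ)+1) : ℤ):ℝ) * h' / k) by ring,
      periodicB1_neg]
    ring
  have h1 : HasSum (fun n : ℕ => f ((n:ℤ)+1)) A := by
    have heq : (fun n : ℕ => f ((n:ℤ)+1)) = (fun n : ℕ => g (n+1)) := by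
      funext n
      have e : ((n:ℤ)+1) = ((n+1 : ℕ):ℤ) := by push_cast; ring
      rw [e, hfg]
    rw [heq]
    exact hAshift ▸ hsum_shift.hasSum
  have h2 : HasSum (fun n : ℕ => f (-((n:ℤ)+1))) A := by
    have heq : (fun n : ℕ => f (-((n:ℤ)+1))) = (fun n : ℕ => f ((n:ℤ)+1)) := funext hfneg
    rw [heq]
    exact h1
  have hZ : HasSum f (A + f 0 + A) := HasSum.of_add_one_of_neg_add_one h1 h2
  have hf0 : f 0 = 0 := by simp [hfdef]
  have htsumZ : ∑' l : ℤ, f l = 2*A := by rw [hZ.tsum_eq, hf0]; ring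
  -- the double sum manipulation
  have hd_hasSum : ∀ d ∈ Finset.Icc 1 (k-1),
      HasSum (fun n : ℕ => (1/(n:ℝ)^3 * Real.sin (2*Real.pi*n*((d:ℝ)/k)))
          * Real.cot (Real.pi*d*h/k))
        ((2*Real.pi)^3/12 * (((d:ℝ)/k)^3 - (3/2)*((d:ℝ)/k)^2 + (1/2)*((d:ℝ)/k))
          * Real.cot (Real.pi*d*h/k)) := by
    intro d hd
    rw [Finset.mem_Icc] at hd
    have hx : ((d:ℝ)/k) ∈ Set.Icc (0:ℝ) 1 := by
      constructor
      · positivity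
      · rw [div_le_one (by positivity)]
        have : d ≤ k := by omega
        exact_mod_cast this
    exact (sin_hasSum_aux _ hx).mul_right _
  have hswap := hasSum_sum hd_hasSum
  have hinner : ∀ n : ℕ, (∑ d ∈ Finset.Icc 1 (k-1),
      (1/(n:ℝ)^3 * Real.sin (2*Real.pi*n*((d:ℝ)/k))) * Real.cot (Real.pi*d*h/k))
      = (-2*(k:ℝ)) * g n := by
    intro n
    by_cases hn : n = 0
    · subst hn
      simp [hgdef]
    · have hstep := stepC_aux h h' k hk hinv n (by omega)
      have hterm : ∀ d ∈ Finset.Icc 1 (k-1),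
          (1/(n:ℝ)^3 * Real.sin (2*Real.pi*n*((d:ℝ)/k))) * Real.cot (Real.pi*d*h/k)
          = (1/(n:ℝ)^3) * (Real.sin (2*Real.pi*n*d/k) * Real.cot (Real.pi*d*h/k)) := by
        intro d hd
        have e : 2*Real.pi*(n:ℝ)*((d:ℝ)/k) = 2*Real.pi*n*d/k := by ring
        rw [mul_assoc, e]
      rw [Finset.sum_congr rfl hterm, ← Finset.mul_sum, hstep]
      simp only [hgdef, if_neg hn]
      have hnR : (n:ℝ) ≠ 0 := Nat.cast_ne_zero.mpr hn
      field_simp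
  have hgsum2 : HasSum (fun n => (-2*(k:ℝ)) * g n) ((-2*(k:ℝ)) * A) := hgA.mul_left _
  have hfinal : (∑ d ∈ Finset.Icc 1 (k-1),
      (2*Real.pi)^3/12 * (((d:ℝ)/k)^3 - (3/2)*((d:ℝ)/k)^2 + (1/2)*((d:ℝ)/k))
        * Real.cot (Real.pi*d*h/k)) = (-2*(k:ℝ)) * A := by
    have heq : (fun n : ℕ => ∑ d ∈ Finset.Icc 1 (k-1),
        (1/(n:ℝ)^3 * Real.sin (2*Real.pi*n*((d:ℝ)/k))) * Real.cot (Real.pi*d*h/k))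
        = (fun n : ℕ => (-2*(k:ℝ)) * g n) := funext hinner
    rw [heq] at hswap
    exact hswap.unique hgsum2
  have hfactor : (∑ d ∈ Finset.Icc 1 (k-1),
      (2*Real.pi)^3/12 * (((d:ℝ)/k)^3 - (3/2)*((d:ℝ)/k)^2 + (1/2)*((d:ℝ)/k))
        * Real.cot (Real.pi*d*h/k))
      = (2*Real.pi)^3/12 * ∑ d ∈ Finset.Icc 1 (k-1),
        (((d:ℝ)/k)^3 - (3/2)*((d:ℝ)/k)^2 + (1/2)*((d:ℝ)/k)) * Real.cot (Real.pi*d*h/k) := by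
    rw [Finset.mul_sum]
    exact Finset.sum_congr rfl fun d _ => by ring
  rw [hfactor] at hfinal
  rw [htsumZ]
  have hπ : Real.pi ≠ 0 := Real.pi_ne_zero
  have h2π : ((2*Real.pi)^3/12 : ℝ) ≠ 0 := by positivity
  have hS : ∑ d ∈ Finset.Icc 1 (k-1),
      (((d:ℝ)/k)^3 - (3/2)*((d:ℝ)/k)^2 + (1/2)*((d:ℝ)/k)) * Real.cot (Real.pi*d*h/k)
      = ((-2*(k:ℝ)) * A) / ((2*Real.pi)^3/12) := by
    rw [eq_div_iff h2π, mul_comm]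
    exact hfinal
  rw [hS]
  field_simp
  ring
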